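/- Let $\pi = (\pi_1, \ldots, \pi_\ell)$ be an overpartition in $\overline{\mathcal{B}}(\alpha_1,\ldots,\alpha_\lambda;\eta,k,r)$, and let $\{\pi_{c+l}\}_{0 \leq l \leq k-2}$ and $\{\pi_{d+l}\}_{0 \leq l \leq k-2}$ be two $(k-1)$-bands of $\pi$ with $c < d \leq c+k-2$ (i.e., they overlap). Then the two bands have the same parity; that is, $[|\pi_c|/\eta] + \cdots + [|\pi_{c+k-2}|/\eta] + \overline{V}_\pi(\pi_c) + \overline{O}_\pi(\pi_{c+k-2}) \equiv [|\pi_d|/\eta] + \cdots + [|\pi_{d+k-2}|/\eta] + \overline{V}_\pi(\pi_d) + \overline{O}_\pi(\pi_{d+k-2}) \pmod{2}$. -/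

import Mathlib

/-- A part of an overpartition: a size together with a flag telling
whether the part is overlined. -/
structure OPart where
  size : ℕ
  overlined : Bool
deriving DecidableEq

/-- The value of a part in the ordering `1̄ < 1 < 2̄ < 2 < ⋯`:
an overlined part of size `t` has value `2t - 1`, a non-overlined one `2t`. -/
def OPart.val (p : OPart) : ℕ := 2 * p.size - (if p.overlined then 1 else 0)

def dpart : OPart := ⟨0, false⟩

/-- value of the `i`-th part (0-based). -/
def pval (π : List OPart) (i : ℕ) : ℕ := (π.getD i dpart).val

def pover (π : List OPart) (i : ℕ) : Bool := (π.getD i dpart).overlined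

def psize (π : List OPart) (i : ℕ) : ℕ := (π.getD i dpart).size

/-- the weight `|π|`: the sum of the sizes of the parts. -/
def wt (π : List OPart) : ℕ := (π.map OPart.size).sum

/-- An overpartition: a sequence of positive parts, non-increasing in the
ordering `1̄ < 1 < 2̄ < 2 < ⋯`, in which each size is overlined at most once
(the overlined copy, being smallest among equal sizes, is the last occurrence). -/
def IsOverPartition (π : List OPart) : Prop :=
  List.Pairwise (fun p q : OPart => q.val ≤ p.val) π ∧
  (∀ p ∈ π, 0 < p.size) ∧
  (∀ t : ℕ, π.count (⟨t, true⟩ : OPart) ≤ 1)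

/-- `{π_{i+l}}_{0 ≤ l ≤ m-1}` is an `m`-band of `π`:
`π_i ≤ π_{i+m-1} + η`, with strict inequality if `π_i` is overlined. -/
def IsBand (η : ℕ) (π : List OPart) (m i : ℕ) : Prop :=
  i + m ≤ π.length ∧
  pval π i ≤ pval π (i + m - 1) + 2 * η ∧
  (pover π i = true → pval π i < pval π (i + m - 1) + 2 * η)

/-- `V̄_π(N)`: the number of overlined parts of value at most `N`
whose size is not divisible by `η`. -/
def Vbar (η : ℕ) (π : List OPart) (N : ℕ) : ℕ :=
  π.countP (fun p => p.overlined && decide (p.val ≤ N) && !(decide (p.size % η = 0)))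

/-- `Ō_π(N)`: the number of overlined parts of value at least `N`
whose size is divisible by `η`. -/
def Obar (η : ℕ) (π : List OPart) (N : ℕ) : ℕ :=
  π.countP (fun p => p.overlined && decide (N ≤ p.val) && decide (p.size % η = 0))

/-- `f_{≤η}(π)`: the number of parts not exceeding `η`. -/
def fLe (η : ℕ) (π : List OPart) : ℕ :=
  π.countP (fun p => decide (p.val ≤ 2 * η))

/-- `[|π_i|/η] + ⋯ + [|π_{i+m-1}|/η]`. -/
def bandSum (η : ℕ) (π : List OPart) (i m : ℕ) : ℕ :=
  ∑ l ∈ Finset.range m, psize π (i + l) / η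

/-- Every part is congruent to `0, α_1, …, α_λ` modulo `η`. -/
def CongParts (α : ℕ → ℕ) (lam η : ℕ) (π : List OPart) : Prop :=
  ∀ p ∈ π, p.size % η = 0 ∨ ∃ s, 1 ≤ s ∧ s ≤ lam ∧ p.size % η = α s

/-- The class `B̄(α_1,…,α_λ; η, k, r)`: conditions (1)–(4) of the definition
of `B̄₀`. -/
def InBbar (α : ℕ → ℕ) (lam η k r : ℕ) (π : List OPart) : Prop :=
  IsOverPartition π ∧
  CongParts α lam η π ∧
  (∀ p ∈ π, p.overlined = false → η ∣ p.size) ∧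
  (∀ i, i + k ≤ π.length →
    pval π (i + k - 1) + 2 * η ≤ pval π i ∧
    (pover π i = false → pval π (i + k - 1) + 2 * η < pval π i)) ∧
  fLe η π ≤ r

/-- An `m`-band at `i` is even:
`[|π_i|/η]+⋯+[|π_{i+m-1}|/η] ≡ r - 1 + V̄_π(π_i) + Ō_π(π_{i+m-1}) (mod 2)`. -/
def EvenBand (η r : ℕ) (π : List OPart) (m i : ℕ) : Prop :=
  Int.ModEq 2 (bandSum η π i m)
    ((r : ℤ) - 1 + (Vbar η π (pval π i) : ℤ) + (Obar η π (pval π (i + m - 1)) : ℤ))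

/-- Condition (5) of the definition of `B̄₀`. -/
def Cond5 (η k r : ℕ) (π : List OPart) : Prop :=
  fLe η π = r → (⟨η, true⟩ : OPart) ∉ π →
    ∃ i, IsBand η π (k - 1) i ∧ pval π i < 2 * (2 * η) - 1

/-- The class `B̄₀(α_1,…,α_λ; η, k, r)`: conditions (1)–(6). -/
def InB0 (α : ℕ → ℕ) (lam η k r : ℕ) (π : List OPart) : Prop :=
  InBbar α lam η k r π ∧ Cond5 η k r π ∧
  ∀ i, IsBand η π (k - 1) i → EvenBand η r π (k - 1) i

/-- `s(π) > t̄η`: every overlined part divisible by `η` has size `> tη`. -/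
def SGt (η t : ℕ) (π : List OPart) : Prop :=
  ∀ p ∈ π, p.overlined = true → η ∣ p.size → t * η < p.size

/-- `s(π) = t̄η`. -/
def SEq (η t : ℕ) (π : List OPart) : Prop :=
  (⟨t * η, true⟩ : OPart) ∈ π ∧
  ∀ p ∈ π, p.overlined = true → η ∣ p.size → t * η ≤ p.size

/-- `g(π) ≥ x` (value `x`): every part starting a `(k-1)`-band has value `≥ x`. -/
def GGe (η k : ℕ) (π : List OPart) (x : ℕ) : Prop :=
  ∀ i, IsBand η π (k - 1) i → x ≤ pval π i

/-- `g(π) < x`: some part starting a `(k-1)`-band has value `< x`. -/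
def GLt (η k : ℕ) (π : List OPart) (x : ℕ) : Prop :=
  ∃ i, IsBand η π (k - 1) i ∧ pval π i < x

/-- `π ∈ B̄₀^=(α_1,…,α_λ; η,k,r | t)`. -/
def InBeq (α : ℕ → ℕ) (lam η k r t : ℕ) (π : List OPart) : Prop :=
  InB0 α lam η k r π ∧
  ((SEq η t π ∧ GGe η k π (2 * (t * η) - 1)) ∨
   (SGt η t π ∧ GGe η k π (2 * (t * η)) ∧ GLt η k π (2 * ((t + 1) * η) - 1)))

/-- `π ∈ B̄₀^>(α_1,…,α_λ; η,k,r | t)`. -/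
def InBgt (α : ℕ → ℕ) (lam η k r t : ℕ) (π : List OPart) : Prop :=
  InB0 α lam η k r π ∧ SGt η t π ∧ GGe η k π (2 * ((t + 1) * η) - 1)

/-- An `m`-band belonging to the closed interval `[(t-1)η, (t+1)η]`. -/
def BandInC (η t : ℕ) (π : List OPart) (m i : ℕ) : Prop :=
  IsBand η π m i ∧ 2 * ((t - 1) * η) ≤ pval π (i + m - 1) ∧
  pval π i ≤ 2 * ((t + 1) * η)

/-- An `m`-band belonging to `[(t-1)η, \overline{(t+1)η})`. -/
def BandInO (η t : ℕ) (π : List OPart) (m i : ℕ) : Prop :=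
  IsBand η π m i ∧ 2 * ((t - 1) * η) ≤ pval π (i + m - 1) ∧
  pval π i < 2 * ((t + 1) * η) - 1

/-- An `m`-band at `i` is of type N. -/
def TypeN (η r t : ℕ) (π : List OPart) (m i : ℕ) : Prop :=
  Int.ModEq 2 (bandSum η π i m)
    ((t : ℤ) + (r : ℤ) - 1 + (Vbar η π (pval π i) : ℤ) +
      (Obar η π (pval π (i + m - 1)) : ℤ))

/-- `π` is obtained from `μ` by inserting the part `p`. -/
def InsertPart (μ : List OPart) (p : OPart) (π : List OPart) : Prop :=
  ∃ l1 l2, μ = l1 ++ l2 ∧ π = l1 ++ p :: l2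

/-- The `(k-1)`-reduction `D_t` as a relation: `μ = D_t(π)`. -/
def DtRel (η t : ℕ) (π μ : List OPart) : Prop :=
  ((⟨t * η, true⟩ : OPart) ∈ π ∧ InsertPart μ ⟨t * η, true⟩ π) ∨
  ((⟨t * η, true⟩ : OPart) ∉ π ∧ InsertPart μ ⟨t * η, false⟩ π)

/-- `μ` has a `(k-2)`-band belonging to `[(t-1)η, \overline{(t+1)η})` of type N. -/
def HasTypeNBand (η r k t : ℕ) (μ : List OPart) : Prop :=
  ∃ i, BandInO η t μ (k - 2) i ∧ TypeN η r t μ (k - 2) i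

/-- The `(k-1)`-augmentation `C_t` as a relation: `π = C_t(μ)`. -/
def CtRel (η r k t : ℕ) (μ π : List OPart) : Prop :=
  (HasTypeNBand η r k t μ ∧ InsertPart μ ⟨t * η, false⟩ π) ∨
  (¬ HasTypeNBand η r k t μ ∧ InsertPart μ ⟨t * η, true⟩ π)

/-- `B₁`-type overpartitions: conditions (1)–(4), no overlined part divisible
by `η`, and at most `r - 1` parts not exceeding `η`. -/
def InB1over (α : ℕ → ℕ) (lam η k r : ℕ) (π : List OPart) : Prop :=
  InBbar α lam η k r π ∧ (∀ p ∈ π, p.overlined = true → ¬ η ∣ p.size) ∧ fLe η π < r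

/-- `D_η`: partitions into distinct parts divisible by `η`. -/
def InD (η : ℕ) (τ : List ℕ) : Prop :=
  List.Pairwise (· > ·) τ ∧ ∀ x ∈ τ, 0 < x ∧ η ∣ x

/-- Bressoud's class `B₁(α_1,…,α_λ; η,k,r)` of ordinary partitions. -/
def InB1nat (α : ℕ → ℕ) (lam η k r : ℕ) (σ : List ℕ) : Prop :=
  List.Pairwise (· ≥ ·) σ ∧ (∀ x ∈ σ, 0 < x) ∧
  (∀ x ∈ σ, x % η = 0 ∨ ∃ s, 1 ≤ s ∧ s ≤ lam ∧ x % η = α s) ∧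
  (∀ x : ℕ, ¬ η ∣ x → σ.count x ≤ 1) ∧
  (∀ i, i + k ≤ σ.length →
    σ.getD (i + k - 1) 0 + η ≤ σ.getD i 0 ∧
    (η ∣ σ.getD i 0 → σ.getD (i + k - 1) 0 + η < σ.getD i 0)) ∧
  σ.countP (fun x => decide (x ≤ η)) < r

/-- The class `Ā₀(α_1,…,α_λ; η,k,r)`. Congruence conditions involving `η/2`
are stated with sizes doubled. -/
def InA0 (α : ℕ → ℕ) (lam η k r : ℕ) (π : List OPart) : Prop :=
  IsOverPartition π ∧
  CongParts α lam η π ∧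
  (Even lam →
    ∀ p ∈ π, p.overlined = false →
      η ∣ p.size ∧
      ¬ (2 * η * (2 * k - lam - 1) ∣ 2 * p.size) ∧
      2 * p.size % (2 * η * (2 * k - lam - 1)) ≠ η * (2 * r - lam) ∧
      2 * p.size % (2 * η * (2 * k - lam - 1)) ≠
        2 * η * (2 * k - lam - 1) - η * (2 * r - lam)) ∧
  (¬ Even lam →
    (∀ p ∈ π, p.overlined = false →
      η ∣ 2 * p.size ∧
      p.size % (2 * η) ≠ η ∧
      ¬ (2 * η * (2 * k - lam - 1) ∣ 2 * p.size) ∧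
      2 * p.size % (2 * η * (2 * k - lam - 1)) ≠ η * (2 * r - lam) ∧
      2 * p.size % (2 * η * (2 * k - lam - 1)) ≠
        2 * η * (2 * k - lam - 1) - η * (2 * r - lam)) ∧
    (∀ p ∈ π, p.overlined = true → 2 * p.size % (2 * η) ≠ η))


section Helpers

lemma countP_eq_sum (f : OPart → Bool) (l : List OPart) :
    l.countP f = ∑ j ∈ Finset.range l.length, if f (l.getD j dpart) then 1 else 0 := by
  induction l with
  | nil => simp
  | cons a l ih =>
    rw [List.countP_cons, List.length_cons, Finset.sum_range_succ']
    simp only [List.getD_cons_succ, List.getD_cons_zero, ih]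

lemma psize_pos (π : List OPart) (hpos : ∀ p ∈ π, 0 < p.size) {j : ℕ}
    (hj : j < π.length) : 0 < psize π j := by
  unfold psize
  rw [List.getD_eq_getElem π dpart hj]
  exact hpos _ (List.getElem_mem hj)

lemma pval_add (π : List OPart) (hpos : ∀ p ∈ π, 0 < p.size) {j : ℕ}
    (hj : j < π.length) :
    pval π j + (if pover π j = true then 1 else 0) = 2 * psize π j := by
  have h : 0 < π[j].size := hpos _ (List.getElem_mem hj)
  unfold pval pover psize
  rw [List.getD_eq_getElem π dpart hj]
  unfold OPart.val
  by_cases hb : π[j].overlined <;> simp [hb] <;> omega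

lemma pval_anti (π : List OPart) (hs : List.Pairwise (fun p q : OPart => q.val ≤ p.val) π)
    {e e' : ℕ} (h : e ≤ e') (he' : e' < π.length) : pval π e' ≤ pval π e := by
  rcases eq_or_lt_of_le h with rfl | hlt
  · exact le_refl _
  · have he : e < π.length := lt_trans hlt he'
    unfold pval
    rw [List.getD_eq_getElem π dpart he, List.getD_eq_getElem π dpart he']
    exact List.Pairwise.rel_get_of_lt hs (show (⟨e, he⟩ : Fin π.length) < ⟨e', he'⟩ from hlt)

end Helpers

lemma dup_false (π : List OPart) (hcount : ∀ t : ℕ, π.count (⟨t, true⟩ : OPart) ≤ 1)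
    {e e' : ℕ} (h : e < e') (he' : e' < π.length)
    (hoe : pover π e = true) (hoe' : pover π e' = true)
    (hsz : psize π e = psize π e') : False := by
  have he : e < π.length := h.trans he'
  unfold pover at hoe hoe'
  unfold psize at hsz
  rw [List.getD_eq_getElem π dpart he] at hoe hsz
  rw [List.getD_eq_getElem π dpart he'] at hoe' hsz
  obtain ⟨s, h1⟩ : ∃ s, π[e] = (⟨s, true⟩ : OPart) := by
    refine ⟨π[e].size, ?_⟩
    cases hp : π[e]
    rw [hp] at hoe
    simp only at hoe
    simp [hoe]
  have h2 : π[e'] = (⟨s, true⟩ : OPart) := by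
    cases hp : π[e']
    rw [hp] at hoe' hsz
    rw [h1] at hsz
    simp only at hoe' hsz
    simp [hoe', ← hsz]
  have hc2 : 2 ≤ π.count (⟨s, true⟩ : OPart) := by
    rw [List.count, countP_eq_sum]
    have hsub : ({e, e'} : Finset ℕ) ⊆ Finset.range π.length := by
      intro x hx
      simp only [Finset.mem_insert, Finset.mem_singleton] at hx
      rcases hx with rfl | rfl <;> simp [Finset.mem_range] <;> omega
    calc (2:ℕ) = ∑ j ∈ ({e, e'} : Finset ℕ),
          (if (π.getD j dpart) == (⟨s, true⟩ : OPart) then 1 else 0) := by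
          rw [Finset.sum_pair (by omega : e ≠ e')]
          rw [List.getD_eq_getElem π dpart he, List.getD_eq_getElem π dpart he', h1, h2]
          simp
      _ ≤ _ := Finset.sum_le_sum_of_subset hsub
  have := hcount s
  omega

lemma dup_eq (π : List OPart) (hcount : ∀ t : ℕ, π.count (⟨t, true⟩ : OPart) ≤ 1)
    {e e' : ℕ} (he : e < π.length) (he' : e' < π.length)
    (hoe : pover π e = true) (hoe' : pover π e' = true)
    (hsz : psize π e = psize π e') : e = e' := by
  rcases lt_trichotomy e e' with h | h | h
  · exact absurd (dup_false π hcount h he' hoe hoe' hsz) (by simp)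
  · exact h
  · exact absurd (dup_false π hcount h he hoe' hoe hsz.symm) (by simp)

lemma val_inj (π : List OPart) (hpos : ∀ p ∈ π, 0 < p.size)
    (hcount : ∀ t : ℕ, π.count (⟨t, true⟩ : OPart) ≤ 1)
    {e e' : ℕ} (he : e < π.length) (he' : e' < π.length)
    (ho : pover π e = true) (hv : pval π e = pval π e') : e = e' := by
  have a1 := pval_add π hpos he
  have a2 := pval_add π hpos he'
  have p1 := psize_pos π hpos he
  have p2 := psize_pos π hpos he'
  rw [ho] at a1
  simp at a1
  by_cases ho' : pover π e' = true
  · rw [ho'] at a2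
    simp at a2
    exact dup_eq π hcount he he' ho ho' (by omega)
  · have ho2 : pover π e' = false := by simpa using ho'
    rw [ho2] at a2
    simp at a2
    omega

lemma not_dvd_between {η Q A : ℕ} (hη : 0 < η) (hdvd : η ∣ A)
    (h1 : Q * η < A) (h2 : A < Q * η + η) : False := by
  obtain ⟨Z, rfl⟩ := hdvd
  rw [mul_comm Q η] at h1 h2
  have hQZ : Q < Z := Nat.lt_of_mul_lt_mul_left h1
  have h3 : η * Z < η * (Q + 1) := by rw [Nat.mul_succ]; exact h2
  have hZQ : Z < Q + 1 := Nat.lt_of_mul_lt_mul_left h3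
  omega

lemma mod_helper (M ρ η : ℕ) (h : ρ < η) : (M * η + ρ) % η = ρ := by
  rw [mul_comm M η, Nat.mul_add_mod, Nat.mod_eq_of_lt h]

lemma pdvd_at (π : List OPart) {η : ℕ} (hdvd : ∀ p ∈ π, p.overlined = false → η ∣ p.size)
    {j : ℕ} (hj : j < π.length) (h : pover π j = false) : η ∣ psize π j := by
  unfold pover at h
  unfold psize
  rw [List.getD_eq_getElem π dpart hj] at h ⊢
  exact hdvd _ (List.getElem_mem hj) h

lemma pcong_at {α : ℕ → ℕ} {lam η : ℕ} (π : List OPart) (hcong : CongParts α lam η π)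
    {j : ℕ} (hj : j < π.length) :
    psize π j % η = 0 ∨ ∃ s, 1 ≤ s ∧ s ≤ lam ∧ psize π j % η = α s := by
  unfold psize
  rw [List.getD_eq_getElem π dpart hj]
  exact hcong _ (List.getElem_mem hj)

lemma key_window (π : List OPart) {η : ℕ} (hη : 0 < η)
    (hpos : ∀ p ∈ π, 0 < p.size)
    (hdvd : ∀ p ∈ π, p.overlined = false → η ∣ p.size)
    {e M v L : ℕ} (he : e < π.length) (hv : v ≤ η)
    (hL : 2 * (M * η) < L) (h1 : L ≤ pval π e)
    (h2 : pval π e ≤ 2 * (M * η + v) - 1) :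
    pover π e = true ∧ M * η < psize π e ∧ psize π e ≤ M * η + v := by
  have ha := pval_add π hpos he
  have hp := psize_pos π hpos he
  by_cases ho : pover π e = true
  · rw [ho] at ha
    simp at ha
    refine ⟨ho, ?_, ?_⟩ <;> omega
  · have ho' : pover π e = false := by simpa using ho
    rw [ho'] at ha
    simp at ha
    have hd := pdvd_at π hdvd he ho'
    exact absurd hd (fun hdd => not_dvd_between hη hdd (Q := M) (by omega) (by omega))

lemma not_dvd_between' {η B A : ℕ} (hη : 0 < η) (hB : η ∣ B) (hdvd : η ∣ A)
    (h1 : B < A) (h2 : A < B + η) : False := by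
  obtain ⟨Q, rfl⟩ := hB
  obtain ⟨Z, rfl⟩ := hdvd
  have hQZ : Q < Z := Nat.lt_of_mul_lt_mul_left h1
  have h3 : η * Z < η * (Q + 1) := by rw [Nat.mul_succ]; exact h2
  have hZQ : Z < Q + 1 := Nat.lt_of_mul_lt_mul_left h3
  omega

lemma mod_helper' {η B ρ : ℕ} (hB : η ∣ B) (h : ρ < η) : (B + ρ) % η = ρ := by
  obtain ⟨Q, rfl⟩ := hB
  rw [Nat.mul_add_mod, Nat.mod_eq_of_lt h]

lemma key_window' (π : List OPart) {η : ℕ} (hη : 0 < η)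
    (hpos : ∀ p ∈ π, 0 < p.size)
    (hdvd : ∀ p ∈ π, p.overlined = false → η ∣ p.size)
    {e B v L : ℕ} (he : e < π.length) (hB : η ∣ B) (hv : v ≤ η)
    (hL : 2 * B < L) (h1 : L ≤ pval π e)
    (h2 : pval π e ≤ 2 * (B + v) - 1) :
    pover π e = true ∧ B < psize π e ∧ psize π e ≤ B + v := by
  have ha := pval_add π hpos he
  have hp := psize_pos π hpos he
  by_cases ho : pover π e = true
  · rw [ho] at ha
    simp at ha
    refine ⟨ho, by omega, by omega⟩
  · have ho' : pover π e = false := by simpa using ho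
    rw [ho'] at ha
    simp at ha
    have hd := pdvd_at π hdvd he ho'
    exact absurd hd (fun hdd => not_dvd_between' hη hB hdd (by omega) (by omega))


lemma no_bad {α : ℕ → ℕ} {lam η : ℕ} (π : List OPart) (hη : 0 < η)
    (hs : List.Pairwise (fun p q : OPart => q.val ≤ p.val) π)
    (hpos : ∀ p ∈ π, 0 < p.size)
    (hcount : ∀ t : ℕ, π.count (⟨t, true⟩ : OPart) ≤ 1)
    (hcong : CongParts α lam η π)
    (hdvd : ∀ p ∈ π, p.overlined = false → η ∣ p.size)
    {m' c d j : ℕ} (hlam : lam ≤ m')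
    (hbc1 : pval π c ≤ pval π (c + m') + 2 * η)
    (hbc2 : pover π c = true → pval π c < pval π (c + m') + 2 * η)
    (hbd1 : pval π d ≤ pval π (d + m') + 2 * η)
    (hbd2 : pover π d = true → pval π d < pval π (d + m') + 2 * η)
    (hn : d + m' < π.length)
    (hcd : c < d) (hdc : d ≤ c + m')
    (hj1 : c ≤ j) (hj2 : j < d)
    {a b₀ P : ℕ} (ha : 1 ≤ a) (hab : a < b₀) (hb : b₀ ≤ η) (hP : η ∣ P)
    (hoj : pover π j = true) (hojm : pover π (j + m' + 1) = true)
    (hxj : psize π j = P + 2 * η + a)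
    (hyjm : psize π (j + m' + 1) = P + b₀) : False := by
  have hn' : ∀ e, e ≤ d + m' → e < π.length := fun e he => lt_of_le_of_lt he hn
  have oval : ∀ e, e < π.length → pover π e = true → pval π e + 1 = 2 * psize π e := by
    intro e he ho
    have := pval_add π hpos he
    rw [ho] at this
    simpa using this
  have hvj : pval π j + 1 = 2 * (P + 2 * η + a) := by
    rw [← hxj]; exact oval j (hn' j (by omega)) hoj
  have hvjm : pval π (j + m' + 1) + 1 = 2 * (P + b₀) := by
    rw [← hyjm]; exact oval _ (hn' _ (by omega)) hojm
  -- chain inequalities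
  have t1 : pval π j ≤ pval π c := pval_anti π hs hj1 (hn' j (by omega))
  have t2 : pval π (c + m') ≤ pval π d := pval_anti π hs hdc (hn' (c + m') (by omega))
  have t3 : pval π (d + m') ≤ pval π (j + m' + 1) :=
    pval_anti π hs (by omega) (hn' (d + m') le_rfl)
  -- part d analysis
  obtain ⟨hod, hd1, hd2⟩ :=
    key_window' π hη hpos hdvd (e := d) (B := P + η) (v := b₀) (L := 2 * (P + η + a) - 1)
      (hn' d (by omega)) (by exact Dvd.dvd.add hP dvd_rfl) hb (by omega)
      (by omega) (by omega)
  have hvd := oval d (hn' d (by omega)) hod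
  obtain ⟨γ, hγeq, hγ1, hγ2⟩ :
      ∃ γ, psize π d = P + η + γ ∧ a ≤ γ ∧ γ + 1 ≤ b₀ := by
    have hstrict := hbd2 hod
    exact ⟨psize π d - (P + η), by omega, by omega, by omega⟩
  have u1 : 2 * (P + γ) ≤ pval π (d + m') := by
    have hstrict := hbd2 hod
    omega
  -- part c analysis
  obtain ⟨hoc, hcc1, hcc2⟩ :=
    key_window' π hη hpos hdvd (e := c) (B := P + 2 * η) (v := γ) (L := 2 * (P + 2 * η + a) - 1)
      (hn' c (by omega)) (by exact Dvd.dvd.add hP (Dvd.dvd.mul_left dvd_rfl 2)) (by omega)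
      (by omega) (by omega) (by omega)
  have hvc := oval c (hn' c (by omega)) hoc
  obtain ⟨γc, hγceq, hγc1, hγc2⟩ :
      ∃ γc, psize π c = P + 2 * η + γc ∧ a ≤ γc ∧ γc ≤ γ :=
    ⟨psize π c - (P + 2 * η), by omega, by omega, by omega⟩
  have u2 : 2 * (P + η + γc) ≤ pval π (c + m') := by
    have hstrict := hbc2 hoc
    omega
  -- the residue function
  set f : ℕ → ℕ := fun e => psize π e % η with hf
  -- Group 1
  have hG1 : ∀ e ∈ Finset.Ico c (j + 1),
      pover π e = true ∧ psize π e = P + 2 * η + f e ∧ a ≤ f e ∧ f e ≤ γc := by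
    intro e he
    rw [Finset.mem_Ico] at he
    have hen : e < π.length := hn' e (by omega)
    have q1 : pval π j ≤ pval π e := pval_anti π hs (by omega) (hn' j (by omega))
    have q2 : pval π e ≤ pval π c := pval_anti π hs (by omega) hen
    obtain ⟨ho, hb1, hb2⟩ :=
      key_window' π hη hpos hdvd (e := e) (B := P + 2 * η) (v := γc)
        (L := 2 * (P + 2 * η + a) - 1) hen
        (by exact Dvd.dvd.add hP (Dvd.dvd.mul_left dvd_rfl 2)) (by omega)
        (by omega) (by omega) (by omega)
    have hv := oval e hen ho
    obtain ⟨ρ, hρeq, hρ1, hρ2⟩ :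
        ∃ ρ, psize π e = P + 2 * η + ρ ∧ a ≤ ρ ∧ ρ ≤ γc :=
      ⟨psize π e - (P + 2 * η), by omega, by omega, by omega⟩
    have hfe : f e = ρ := by
      rw [hf]
      simp only
      rw [hρeq, mod_helper' (by exact Dvd.dvd.add hP (Dvd.dvd.mul_left dvd_rfl 2)) (by omega)]
    exact ⟨ho, by omega, by omega, by omega⟩
  -- Group 2
  have hG2 : ∀ e ∈ Finset.Ico d (c + m' + 1),
      pover π e = true ∧ psize π e = P + η + f e ∧ γc + 1 ≤ f e ∧ f e ≤ γ := by
    intro e he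
    rw [Finset.mem_Ico] at he
    have hen : e < π.length := hn' e (by omega)
    have q1 : pval π (c + m') ≤ pval π e := pval_anti π hs (by omega) (hn' (c + m') (by omega))
    have q2 : pval π e ≤ pval π d := pval_anti π hs (by omega) hen
    obtain ⟨ho, hb1, hb2⟩ :=
      key_window' π hη hpos hdvd (e := e) (B := P + η) (v := γ)
        (L := 2 * (P + η + γc)) hen
        (by exact Dvd.dvd.add hP dvd_rfl) (by omega)
        (by omega) (by omega) (by omega)
    have hv := oval e hen ho
    obtain ⟨ρ, hρeq, hρ1, hρ2⟩ :
        ∃ ρ, psize π e = P + η + ρ ∧ γc + 1 ≤ ρ ∧ ρ ≤ γ :=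
      ⟨psize π e - (P + η), by omega, by omega, by omega⟩
    have hfe : f e = ρ := by
      rw [hf]
      simp only
      rw [hρeq, mod_helper' (by exact Dvd.dvd.add hP dvd_rfl) (by omega)]
    exact ⟨ho, by omega, by omega, by omega⟩
  -- Group 3
  have hG3 : ∀ e ∈ Finset.Ico (j + m' + 2) (d + m' + 1),
      pover π e = true ∧ psize π e = P + f e ∧ γ + 1 ≤ f e ∧ f e + 1 ≤ b₀ := by
    intro e he
    rw [Finset.mem_Ico] at he
    have hen : e < π.length := hn' e (by omega)
    have q1 : pval π (d + m') ≤ pval π e := pval_anti π hs (by omega) (hn' (d + m') le_rfl)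
    have q2 : pval π e ≤ pval π (j + m' + 1) := pval_anti π hs (by omega) hen
    obtain ⟨ho, hb1, hb2⟩ :=
      key_window' π hη hpos hdvd (e := e) (B := P) (v := b₀)
        (L := 2 * (P + γ)) hen hP hb
        (by omega) (by omega) (by omega)
    have hv := oval e hen ho
    -- exclude psize e = P + b₀ (duplicate of part j+m'+1)
    have hne : psize π e ≠ P + b₀ := by
      intro hdup
      exact dup_false π hcount (show j + m' + 1 < e by omega) hen hojm ho (by omega)
    obtain ⟨ρ, hρeq, hρ1, hρ2⟩ :
        ∃ ρ, psize π e = P + ρ ∧ γ + 1 ≤ ρ ∧ ρ + 1 ≤ b₀ :=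
      ⟨psize π e - P, by omega, by omega, by omega⟩
    have hfe : f e = ρ := by
      rw [hf]
      simp only
      rw [hρeq, mod_helper' hP (by omega)]
    exact ⟨ho, by omega, by omega, by omega⟩
  -- the union
  set J : Finset ℕ := (Finset.Ico c (j + 1) ∪ Finset.Ico d (c + m' + 1)) ∪
      Finset.Ico (j + m' + 2) (d + m' + 1) with hJ
  set A : Finset ℕ := (Finset.Icc 1 lam).image α with hA
  have hmaps : ∀ e ∈ J, f e ∈ A := by
    intro e he
    have hfpos : 1 ≤ f e ∧ e < π.length := by
      rw [hJ] at he
      simp only [Finset.mem_union] at he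
      rcases he with (he | he) | he
      · obtain ⟨_, _, h3, _⟩ := hG1 e he
        rw [Finset.mem_Ico] at he
        exact ⟨by omega, hn' e (by omega)⟩
      · obtain ⟨_, _, h3, _⟩ := hG2 e he
        rw [Finset.mem_Ico] at he
        exact ⟨by omega, hn' e (by omega)⟩
      · obtain ⟨_, _, h3, _⟩ := hG3 e he
        rw [Finset.mem_Ico] at he
        exact ⟨by omega, hn' e (by omega)⟩
    rcases pcong_at π hcong hfpos.2 with h0 | ⟨t, ht1, ht2, ht3⟩
    · rw [hf] at hfpos; simp only at hfpos; omega
    · rw [hA]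
      exact Finset.mem_image.mpr ⟨t, Finset.mem_Icc.mpr ⟨ht1, ht2⟩, ht3.symm⟩
  have hinj : Set.InjOn f J := by
    intro e he e' he' hfe
    rw [hJ] at he he'
    simp only [Finset.coe_union, Set.mem_union, Finset.mem_coe] at he he'
    have hsame : ∀ x y : ℕ, x < π.length → y < π.length → pover π x = true →
        pover π y = true → psize π x = psize π y → x = y := by
      intro x y hx hy hox hoy hxy
      exact dup_eq π hcount hx hy hox hoy hxy
    rcases he with (he | he) | he <;> rcases he' with (he' | he') | he'
    · obtain ⟨o1, s1, _, _⟩ := hG1 e he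
      obtain ⟨o2, s2, _, _⟩ := hG1 e' he'
      rw [Finset.mem_Ico] at he he'
      exact hsame e e' (hn' e (by omega)) (hn' e' (by omega)) o1 o2 (by omega)
    · obtain ⟨_, _, _, h1⟩ := hG1 e he
      obtain ⟨_, _, h2, _⟩ := hG2 e' he'
      omega
    · obtain ⟨_, _, _, h1⟩ := hG1 e he
      obtain ⟨_, _, h2, _⟩ := hG3 e' he'
      omega
    · obtain ⟨_, _, h2, _⟩ := hG2 e he
      obtain ⟨_, _, _, h1⟩ := hG1 e' he'
      omega
    · obtain ⟨o1, s1, _, _⟩ := hG2 e he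
      obtain ⟨o2, s2, _, _⟩ := hG2 e' he'
      rw [Finset.mem_Ico] at he he'
      exact hsame e e' (hn' e (by omega)) (hn' e' (by omega)) o1 o2 (by omega)
    · obtain ⟨_, _, _, h1⟩ := hG2 e he
      obtain ⟨_, _, h2, _⟩ := hG3 e' he'
      omega
    · obtain ⟨_, _, h2, _⟩ := hG3 e he
      obtain ⟨_, _, _, h1⟩ := hG1 e' he'
      omega
    · obtain ⟨_, _, h2, _⟩ := hG3 e he
      obtain ⟨_, _, _, h1⟩ := hG2 e' he'
      omega
    · obtain ⟨o1, s1, _, _⟩ := hG3 e he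
      obtain ⟨o2, s2, _, _⟩ := hG3 e' he'
      rw [Finset.mem_Ico] at he he'
      exact hsame e e' (hn' e (by omega)) (hn' e' (by omega)) o1 o2 (by omega)
  have hcard := Finset.card_le_card_of_injOn f hmaps hinj
  have hcardA : A.card ≤ lam := by
    rw [hA]
    calc ((Finset.Icc 1 lam).image α).card ≤ (Finset.Icc 1 lam).card :=
          Finset.card_image_le
      _ = lam := by rw [Nat.card_Icc]; omega
  have hd12 : Disjoint (Finset.Ico c (j + 1)) (Finset.Ico d (c + m' + 1)) := by
    rw [Finset.disjoint_left]
    intro x h1 h2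
    rw [Finset.mem_Ico] at h1 h2
    omega
  have hd123 : Disjoint (Finset.Ico c (j + 1) ∪ Finset.Ico d (c + m' + 1))
      (Finset.Ico (j + m' + 2) (d + m' + 1)) := by
    rw [Finset.disjoint_left]
    intro x h1 h2
    simp only [Finset.mem_union, Finset.mem_Ico] at h1 h2
    omega
  have hcardJ : J.card = m' + 1 := by
    rw [hJ, Finset.card_union_of_disjoint hd123, Finset.card_union_of_disjoint hd12]
    rw [Nat.card_Ico, Nat.card_Ico, Nat.card_Ico]
    omega
  omega

lemma termwise {α : ℕ → ℕ} {lam η : ℕ} (π : List OPart) (hη : 0 < η)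
    (hs : List.Pairwise (fun p q : OPart => q.val ≤ p.val) π)
    (hpos : ∀ p ∈ π, 0 < p.size)
    (hcount : ∀ t : ℕ, π.count (⟨t, true⟩ : OPart) ≤ 1)
    (hcong : CongParts α lam η π)
    (hdvd : ∀ p ∈ π, p.overlined = false → η ∣ p.size)
    {m' c d j : ℕ} (hlam : lam ≤ m')
    (hbc1 : pval π c ≤ pval π (c + m') + 2 * η)
    (hbc2 : pover π c = true → pval π c < pval π (c + m') + 2 * η)
    (hbd1 : pval π d ≤ pval π (d + m') + 2 * η)
    (hbd2 : pover π d = true → pval π d < pval π (d + m') + 2 * η)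
    (hn : d + m' < π.length)
    (hcd : c < d) (hdc : d ≤ c + m')
    (hj1 : c ≤ j) (hj2 : j < d)
    (hgap : pval π (j + m' + 1) + 2 * η ≤ pval π j)
    (hgaps : pover π j = false → pval π (j + m' + 1) + 2 * η < pval π j) :
    2 ∣ ((psize π j / η : ℤ) - (psize π (j + m' + 1) / η : ℤ)
       + (if pover π j = true ∧ ¬ psize π j % η = 0 then 1 else 0)
       + (if pover π (j + m' + 1) = true ∧ psize π (j + m' + 1) % η = 0 then 1 else 0)) := by
  have hn' : ∀ e, e ≤ d + m' → e < π.length := fun e he => lt_of_le_of_lt he hn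
  have hjn : j < π.length := hn' j (by omega)
  have hjmn : j + m' + 1 < π.length := hn' _ (by omega)
  set x := psize π j with hxdef
  set y := psize π (j + m' + 1) with hydef
  have hxd : x = η * (x / η) + x % η := (Nat.div_add_mod x η).symm
  have hyd : y = η * (y / η) + y % η := (Nat.div_add_mod y η).symm
  have hax : x % η < η := Nat.mod_lt _ hη
  have hay : y % η < η := Nat.mod_lt _ hη
  have hxpos : 0 < x := psize_pos π hpos hjn
  have hypos : 0 < y := psize_pos π hpos hjmn
  have hvx := pval_add π hpos hjn
  have hvy := pval_add π hpos hjmn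
  rw [← hxdef] at hvx
  rw [← hydef] at hvy
  -- the chain upper bound
  have t1 : pval π j ≤ pval π c := pval_anti π hs hj1 hjn
  have t2 : pval π (c + m') ≤ pval π d := pval_anti π hs hdc (hn' _ (by omega))
  have t3 : pval π (d + m') ≤ pval π (j + m' + 1) := pval_anti π hs (by omega) (hn' _ le_rfl)
  have hchain : pval π j ≤ pval π (j + m' + 1) + 4 * η := by omega
  have hchains : pover π j = true → pval π j < pval π (j + m' + 1) + 4 * η := by
    intro ho
    by_contra hge
    push_neg at hge
    have heq : pval π j = pval π c := by omega
    have hjc : j = c := val_inj π hpos hcount hjn (hn' c (by omega)) ho heq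
    subst hjc
    have := hbc2 ho
    omega
  -- decompose, D = qx - qy
  set qx := x / η with hqx
  set qy := y / η with hqy
  set D : ℤ := (qx : ℤ) - (qy : ℤ) with hD
  have hxy : (x : ℤ) - y = η * D + (x % η : ℕ) - (y % η : ℕ) := by
    rw [hD]
    push_cast
    nth_rewrite 1 [hxd]
    nth_rewrite 1 [hyd]
    push_cast
    ring
  have hlow : 1 ≤ 2 * (η:ℤ) * D := by
    have e1 : (2:ℤ) * x - 2 * y = 2 * (η:ℤ) * D + 2 * (x % η : ℕ) - 2 * (y % η : ℕ) := by
      linarith [hxy]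
    have e2 : (2:ℤ) * x - 2 * y ≥ 2 * η - 1 := by
      have := hgap
      rcases (show pover π j = true ∨ pover π j = false by
        cases pover π j <;> simp) with h | h <;> rw [h] at hvx <;>
      rcases (show pover π (j+m'+1) = true ∨ pover π (j+m'+1) = false by
        cases pover π (j+m'+1) <;> simp) with h' | h' <;> rw [h'] at hvy <;>
      simp at hvx hvy <;> push_cast <;> omega
    push_cast at e1 e2 ⊢
    omega
  have hhigh : 2 * (η:ℤ) * D ≤ 6 * η - 1 := by
    have e1 : (2:ℤ) * x - 2 * y = 2 * (η:ℤ) * D + 2 * (x % η : ℕ) - 2 * (y % η : ℕ) := by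
      linarith [hxy]
    have e2 : (2:ℤ) * x - 2 * y ≤ 4 * η + 1 := by
      have := hchain
      rcases (show pover π j = true ∨ pover π j = false by
        cases pover π j <;> simp) with h | h <;> rw [h] at hvx <;>
      rcases (show pover π (j+m'+1) = true ∨ pover π (j+m'+1) = false by
        cases pover π (j+m'+1) <;> simp) with h' | h' <;> rw [h'] at hvy <;>
      simp at hvx hvy <;> push_cast <;> omega
    push_cast at e1 e2 ⊢
    omega
  have hηZ : (0:ℤ) < (η:ℤ) := by exact_mod_cast hη
  have hD12 : D = 1 ∨ D = 2 := by
    have hD1 : 1 ≤ D := by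
      by_contra h
      push_neg at h
      have h' : D ≤ 0 := by omega
      have := mul_nonpos_of_nonneg_of_nonpos (show (0:ℤ) ≤ 2 * η by linarith) h'
      linarith
    have hD2 : D ≤ 2 := by
      by_contra h
      push_neg at h
      have h' : (3:ℤ) ≤ D := by omega
      have := mul_le_mul_of_nonneg_left h' (show (0:ℤ) ≤ 2 * η by linarith)
      linarith
    omega
  -- resolve D and case split
  have hq1 : (qx : ℤ) - (qy : ℤ) = D := hD.symm
  have hdivx : pover π j = false → x % η = 0 :=
    fun h => Nat.mod_eq_zero_of_dvd (pdvd_at π hdvd hjn h)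
  have hdivy : pover π (j + m' + 1) = false → y % η = 0 :=
    fun h => Nat.mod_eq_zero_of_dvd (pdvd_at π hdvd hjmn h)
  rcases hD12 with hD1 | hD1 <;> rw [hD1] at hxy hq1 <;>
    cases hoj : pover π j <;> cases hojm : pover π (j + m' + 1) <;>
    rw [hoj] at hvx <;> rw [hojm] at hvy <;> simp at hvx hvy <;>
    simp only [hoj, hojm, Bool.false_eq_true, false_and, and_true, true_and, if_false] <;>
    [skip; skip; skip; skip; skip; skip; skip; skip]
  -- D = 1 cases
  · -- oj ff, ojm ff : impossible (strict gap)
    exfalso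
    have hst := hgaps hoj
    have hx0 := hdivx hoj
    have hy0 := hdivy hojm
    omega
  · -- oj ff, ojm tt
    have hst := hgaps hoj
    have hx0 := hdivx hoj
    by_cases hay0 : y % η = 0
    · simp [hay0]
      omega
    · exfalso
      omega
  · -- oj tt, ojm ff : impossible with D = 1? need ax ≠ 0; if ax = 0 contradiction
    have hy0 := hdivy hojm
    by_cases hax0 : x % η = 0
    · exfalso
      omega
    · simp [hax0]
      omega
  · -- oj tt, ojm tt
    have hcs := hchains hoj
    by_cases hax0 : x % η = 0 <;> by_cases hay0 : y % η = 0
    · simp [hax0, hay0]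
      omega
    · exfalso
      omega
    · -- BAD case: D=1, ax ≠ 0, ay = 0
      exfalso
      have hqy1 : 1 ≤ qy := by
        rcases Nat.eq_zero_or_pos qy with h0 | h1
        · rw [h0] at hyd; omega
        · exact h1
      have hPlink : η * (qy - 1) + η = η * qy := by
        have h1 : qy - 1 + 1 = qy := by omega
        calc η * (qy - 1) + η = η * ((qy - 1) + 1) := by ring
          _ = η * qy := by rw [h1]
      have hyP : y = η * (qy - 1) + η := by omega
      have hxP : x = η * (qy - 1) + 2 * η + x % η := by omega
      exact no_bad π hη hs hpos hcount hcong hdvd hlam hbc1 hbc2 hbd1 hbd2 hn hcd hdc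
        hj1 hj2 (a := x % η) (b₀ := η) (P := η * (qy - 1)) (by omega) (by omega)
        le_rfl (dvd_mul_right η _) hoj hojm hxP hyP
    · simp [hax0, hay0]
      omega
  -- D = 2 cases
  · -- oj ff, ojm ff
    have hx0 := hdivx hoj
    have hy0 := hdivy hojm
    omega
  · -- oj ff, ojm tt
    have hst := hgaps hoj
    have hx0 := hdivx hoj
    by_cases hay0 : y % η = 0
    · exfalso
      omega
    · simp [hay0]
      omega
  · -- oj tt, ojm ff
    have hcs := hchains hoj
    have hy0 := hdivy hojm
    by_cases hax0 : x % η = 0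
    · simp [hax0]
      omega
    · exfalso
      omega
  · -- oj tt, ojm tt
    have hcs := hchains hoj
    by_cases hax0 : x % η = 0 <;> by_cases hay0 : y % η = 0
    · exfalso
      omega
    · simp [hax0, hay0]
      omega
    · simp [hax0, hay0]
      omega
    · -- possibly BAD: need ax < ay, else contradiction
      rcases lt_trichotomy (x % η) (y % η) with hlt | heq | hgt
      · -- BAD case: D=2, 0 < ax < ay
        exfalso
        have hyP : y = η * qy + y % η := hyd
        have hxP : x = η * qy + 2 * η + x % η := by omega
        exact no_bad π hη hs hpos hcount hcong hdvd hlam hbc1 hbc2 hbd1 hbd2 hn hcd hdc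
          hj1 hj2 (a := x % η) (b₀ := y % η) (P := η * qy) (by omega) hlt
          (by omega) (dvd_mul_right η _) hoj hojm hxP hyP
      · exfalso
        omega
      · exfalso
        omega

lemma vbar_split {η : ℕ} (π : List OPart)
    (hs : List.Pairwise (fun p q : OPart => q.val ≤ p.val) π)
    (hpos : ∀ p ∈ π, 0 < p.size)
    (hcount : ∀ t : ℕ, π.count (⟨t, true⟩ : OPart) ≤ 1)
    {c d : ℕ} (hcd : c < d) (hdn : d < π.length) :
    Vbar η π (pval π c) = Vbar η π (pval π d) +
      ∑ j ∈ Finset.Ico c d,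
        (if pover π j = true ∧ ¬ psize π j % η = 0 then 1 else 0) := by
  have hcn : c < π.length := by omega
  have hvdc : pval π d ≤ pval π c := pval_anti π hs (le_of_lt hcd) hdn
  unfold Vbar
  rw [countP_eq_sum, countP_eq_sum]
  have key : ∀ j ∈ Finset.range π.length,
      (if ((π.getD j dpart).overlined && decide ((π.getD j dpart).val ≤ pval π c) &&
          !decide ((π.getD j dpart).size % η = 0)) = true then 1 else 0) =
      (if ((π.getD j dpart).overlined && decide ((π.getD j dpart).val ≤ pval π d) &&
          !decide ((π.getD j dpart).size % η = 0)) = true then 1 else 0) +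
      (if j ∈ Finset.Ico c d then
        (if pover π j = true ∧ ¬ psize π j % η = 0 then 1 else 0) else 0) := by
    intro j hj
    rw [Finset.mem_range] at hj
    have hov : (π.getD j dpart).overlined = pover π j := rfl
    have hvv : (π.getD j dpart).val = pval π j := rfl
    have hss : (π.getD j dpart).size = psize π j := rfl
    rw [hov, hvv, hss]
    by_cases ho : pover π j = true
    · by_cases hm : psize π j % η = 0
      · simp [hm]
      · have hac : c ≤ j → pval π j ≤ pval π c := fun h => pval_anti π hs h hj
        have had : d ≤ j → pval π j ≤ pval π d := fun h => pval_anti π hs h hj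
        have hsc : j < c → pval π c < pval π j := by
          intro h
          have h1 : pval π c ≤ pval π j := pval_anti π hs (le_of_lt h) hcn
          rcases eq_or_lt_of_le h1 with he | hl
          · exact absurd (val_inj π hpos hcount hj hcn ho he.symm) (by omega)
          · exact hl
        have hsd : j < d → pval π d < pval π j := by
          intro h
          have h1 : pval π d ≤ pval π j := pval_anti π hs (le_of_lt h) hdn
          rcases eq_or_lt_of_le h1 with he | hl
          · exact absurd (val_inj π hpos hcount hj hdn ho he.symm) (by omega)
          · exact hl
        simp only [ho, hm, Bool.and_eq_true, decide_eq_true_eq, Bool.not_eq_true',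
          decide_eq_false_iff_not, Finset.mem_Ico, not_false_iff, and_true, true_and]
        rcases Nat.lt_or_ge j c with hc1 | hc1
        · have k1 := hsc hc1
          have hb1 : ¬ pval π j ≤ pval π c := by omega
          have hb2 : ¬ pval π j ≤ pval π d := by omega
          simp [hb1, hb2, (show ¬(c ≤ j ∧ j < d) by omega)]
        · rcases Nat.lt_or_ge j d with hd1 | hd1
          · have k1 := hac hc1
            have k2 := hsd hd1
            have hb2 : ¬ pval π j ≤ pval π d := by omega
            simp [k1, hb2, hc1, hd1]
          · have k1 := had hd1
            simp [k1, le_trans k1 hvdc, (show ¬ j < d by omega)]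
    · have ho' : pover π j = false := by simpa using ho
      simp [ho']
  rw [Finset.sum_congr rfl key, Finset.sum_add_distrib]
  congr 1
  rw [Finset.sum_ite_mem]
  congr 1
  rw [Finset.inter_eq_right]
  intro x hx
  rw [Finset.mem_Ico] at hx
  rw [Finset.mem_range]
  omega

lemma obar_split {η : ℕ} (π : List OPart)
    (hs : List.Pairwise (fun p q : OPart => q.val ≤ p.val) π)
    (hpos : ∀ p ∈ π, 0 < p.size)
    (hcount : ∀ t : ℕ, π.count (⟨t, true⟩ : OPart) ≤ 1)
    {c' d' : ℕ} (hcd : c' < d') (hdn : d' < π.length) :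
    Obar η π (pval π d') = Obar η π (pval π c') +
      ∑ j ∈ Finset.Ico (c' + 1) (d' + 1),
        (if pover π j = true ∧ psize π j % η = 0 then 1 else 0) := by
  have hcn : c' < π.length := by omega
  have hvdc : pval π d' ≤ pval π c' := pval_anti π hs (le_of_lt hcd) hdn
  unfold Obar
  rw [countP_eq_sum, countP_eq_sum]
  have key : ∀ j ∈ Finset.range π.length,
      (if ((π.getD j dpart).overlined && decide (pval π d' ≤ (π.getD j dpart).val) &&
          decide ((π.getD j dpart).size % η = 0)) = true then 1 else 0) =
      (if ((π.getD j dpart).overlined && decide (pval π c' ≤ (π.getD j dpart).val) &&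
          decide ((π.getD j dpart).size % η = 0)) = true then 1 else 0) +
      (if j ∈ Finset.Ico (c' + 1) (d' + 1) then
        (if pover π j = true ∧ psize π j % η = 0 then 1 else 0) else 0) := by
    intro j hj
    rw [Finset.mem_range] at hj
    have hov : (π.getD j dpart).overlined = pover π j := rfl
    have hvv : (π.getD j dpart).val = pval π j := rfl
    have hss : (π.getD j dpart).size = psize π j := rfl
    rw [hov, hvv, hss]
    by_cases ho : pover π j = true
    · by_cases hm : psize π j % η = 0
      · have hac : j ≤ c' → pval π c' ≤ pval π j := fun h => pval_anti π hs h hcn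
        have had : j ≤ d' → pval π d' ≤ pval π j := fun h => pval_anti π hs h hdn
        have hsc : c' < j → pval π j < pval π c' := by
          intro h
          have h1 : pval π j ≤ pval π c' := pval_anti π hs (le_of_lt h) hj
          rcases eq_or_lt_of_le h1 with he | hl
          · exact absurd (val_inj π hpos hcount hj hcn ho he) (by omega)
          · exact hl
        have hsd : d' < j → pval π j < pval π d' := by
          intro h
          have h1 : pval π j ≤ pval π d' := pval_anti π hs (le_of_lt h) hj
          rcases eq_or_lt_of_le h1 with he | hl
          · exact absurd (val_inj π hpos hcount hj hdn ho he) (by omega)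
          · exact hl
        simp only [ho, hm, Bool.and_eq_true, decide_eq_true_eq, Finset.mem_Ico,
          and_true, true_and]
        rcases Nat.lt_or_ge c' j with hc1 | hc1
        · rcases Nat.lt_or_ge d' j with hd1 | hd1
          · have k1 := hsc hc1
            have k2 := hsd hd1
            have hb1 : ¬ pval π c' ≤ pval π j := by omega
            have hb2 : ¬ pval π d' ≤ pval π j := by omega
            simp [hb1, hb2, hd1, (show ¬(c' + 1 ≤ j ∧ j < d' + 1) by omega)]
          · have k1 := hsc hc1
            have k2 := had (by omega)
            have hb1 : ¬ pval π c' ≤ pval π j := by omega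
            simp [hb1, k2, (show c' + 1 ≤ j by omega), (show j < d' + 1 by omega)]
        · have k1 := hac hc1
          simp [k1, le_trans hvdc k1, (show ¬ c' + 1 ≤ j by omega)]
      · simp [hm]
    · have ho' : pover π j = false := by simpa using ho
      simp [ho']
  rw [Finset.sum_congr rfl key, Finset.sum_add_distrib]
  congr 1
  rw [Finset.sum_ite_mem]
  congr 1
  rw [Finset.inter_eq_right]
  intro x hx
  rw [Finset.mem_Ico] at hx
  rw [Finset.mem_range]
  omega

lemma bandSum_eq {η : ℕ} (π : List OPart) (e m : ℕ) :
    bandSum η π e m = ∑ j ∈ Finset.Ico e (e + m), psize π j / η := by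
  unfold bandSum
  rw [Finset.sum_Ico_eq_sum_range]
  simp

theorem stmt_4 (α : ℕ → ℕ) (lam η k r : ℕ)
    (hη : 0 < η)
    (hαpos : ∀ i, 1 ≤ i → i ≤ lam → 0 < α i ∧ α i < η)
    (hαmono : ∀ i j, 1 ≤ i → i < j → j ≤ lam → α i < α j)
    (hαsym : ∀ i, 1 ≤ i → i ≤ lam → α i = η - α (lam + 1 - i))
    (hrk : r < k) (hlr : lam ≤ r) (hlk : lam + 1 < k)
    (π : List OPart) (hπ : InBbar α lam η k r π)
    (c d : ℕ) (hcd : c < d) (hdc : d ≤ c + k - 2)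
    (hc : IsBand η π (k - 1) c) (hd : IsBand η π (k - 1) d) :
    Int.ModEq 2
      ((bandSum η π c (k - 1) : ℤ) + (Vbar η π (pval π c) : ℤ) +
        (Obar η π (pval π (c + (k - 1) - 1)) : ℤ))
      ((bandSum η π d (k - 1) : ℤ) + (Vbar η π (pval π d) : ℤ) +
        (Obar η π (pval π (d + (k - 1) - 1)) : ℤ)) := by
  obtain ⟨m', rfl⟩ : ∃ m', k = m' + 2 := ⟨k - 2, by omega⟩
  obtain ⟨⟨hs, hpos, hcount⟩, hcong, hdvd, hgap, hfle⟩ := hπ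
  rw [show m' + 2 - 1 = m' + 1 from by omega] at hc hd ⊢
  rw [show c + (m' + 1) - 1 = c + m' from by omega,
      show d + (m' + 1) - 1 = d + m' from by omega] at *
  obtain ⟨hcn, hcb1, hcb2⟩ := hc
  obtain ⟨hdn, hdb1, hdb2⟩ := hd
  have hdc' : d ≤ c + m' := by omega
  have hlam : lam ≤ m' := by omega
  have hn : d + m' < π.length := by omega
  have hgap' : ∀ j, c ≤ j → j < d →
      pval π (j + m' + 1) + 2 * η ≤ pval π j ∧
      (pover π j = false → pval π (j + m' + 1) + 2 * η < pval π j) := by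
    intro j h1 h2
    have hh := hgap j (by omega)
    rwa [show j + (m' + 2) - 1 = j + m' + 1 from by omega] at hh
  -- localization
  have E2 := vbar_split (η := η) π hs hpos hcount hcd (by omega : d < π.length)
  have E3 := obar_split (η := η) π hs hpos hcount (c' := c + m') (d' := d + m')
    (by omega) (by omega)
  have q1 : bandSum η π c (m' + 1) =
      (∑ j ∈ Finset.Ico c d, psize π j / η) +
        ∑ j ∈ Finset.Ico d (c + m' + 1), psize π j / η := by
    rw [bandSum_eq, show c + (m' + 1) = c + m' + 1 from by omega,
      Finset.sum_Ico_consecutive _ (le_of_lt hcd) (by omega : d ≤ c + m' + 1)]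
  have q2 : bandSum η π d (m' + 1) =
      (∑ j ∈ Finset.Ico d (c + m' + 1), psize π j / η) +
        ∑ j ∈ Finset.Ico (c + m' + 1) (d + m' + 1), psize π j / η := by
    rw [bandSum_eq, show d + (m' + 1) = d + m' + 1 from by omega,
      Finset.sum_Ico_consecutive _ (by omega : d ≤ c + m' + 1)
        (by omega : c + m' + 1 ≤ d + m' + 1)]
  have hYX : ((bandSum η π d (m' + 1) : ℤ) + (Vbar η π (pval π d) : ℤ) +
        (Obar η π (pval π (d + m')) : ℤ))
      - ((bandSum η π c (m' + 1) : ℤ) + (Vbar η π (pval π c) : ℤ) +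
        (Obar η π (pval π (c + m')) : ℤ))
      = ((∑ j ∈ Finset.Ico (c + m' + 1) (d + m' + 1), (psize π j / η +
            if pover π j = true ∧ psize π j % η = 0 then 1 else 0) : ℕ) : ℤ)
        - ((∑ j ∈ Finset.Ico c d, (psize π j / η +
            if pover π j = true ∧ ¬ psize π j % η = 0 then 1 else 0) : ℕ) : ℤ) := by
    rw [q1, q2, E2, E3, Finset.sum_add_distrib, Finset.sum_add_distrib]
    push_cast
    ring
  rw [Int.modEq_iff_dvd, hYX]
  have r1 : (∑ j ∈ Finset.Ico (c + m' + 1) (d + m' + 1), (psize π j / η +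
        if pover π j = true ∧ psize π j % η = 0 then 1 else 0)) =
      ∑ i ∈ Finset.range (d - c), (psize π (c + i + m' + 1) / η +
        if pover π (c + i + m' + 1) = true ∧ psize π (c + i + m' + 1) % η = 0
        then 1 else 0) := by
    rw [Finset.sum_Ico_eq_sum_range, show d + m' + 1 - (c + m' + 1) = d - c from by omega]
    exact Finset.sum_congr rfl fun i _ => by
      rw [show c + m' + 1 + i = c + i + m' + 1 from by omega]
  have r2 : (∑ j ∈ Finset.Ico c d, (psize π j / η +
        if pover π j = true ∧ ¬ psize π j % η = 0 then 1 else 0)) =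
      ∑ i ∈ Finset.range (d - c), (psize π (c + i) / η +
        if pover π (c + i) = true ∧ ¬ psize π (c + i) % η = 0 then 1 else 0) := by
    rw [Finset.sum_Ico_eq_sum_range]
  rw [r1, r2]
  push_cast
  rw [← Finset.sum_sub_distrib]
  apply Finset.dvd_sum
  intro i hi
  rw [Finset.mem_range] at hi
  have T := termwise π hη hs hpos hcount hcong hdvd hlam hcb1 hcb2 hdb1 hdb2 hn hcd hdc'
    (show c ≤ c + i from by omega) (show c + i < d from by omega)
    (hgap' (c + i) (by omega) (by omega)).1 (hgap' (c + i) (by omega) (by omega)).2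
  omega
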